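/- For every n ≥ 4, let A_n be the deterministic finite automaton with state set {0,1,…,n-1}, alphabet {a,b,c,d}, initial state 0 and final state set {n-1}, where a acts as the cycle (0,1,…,n-2) fixing n-1, b acts as the transposition (0,1), c maps n-2 to 0 and fixes all other states, and d maps n-2 to n-1 and fixes all other states. Then the language L(A_n) is a right ideal with quotient complexity n and syntactic complexity exactly n^{n-1}. -/

import Mathlib

/-- The left quotient of a language `L` by a word `w`: `{x | w ++ x ∈ L}`. -/
def leftQ {α : Type*} (L : Set (List α)) (w : List α) : Set (List α) :=
  {x | w ++ x ∈ L}

/-- Quotient (state) complexity: the number of distinct left quotients of `L`. -/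
noncomputable def quotCompl {α : Type*} (L : Set (List α)) : ℕ :=
  Nat.card (Set.range (leftQ L))

/-- The syntactic (Myhill) congruence of `L`. -/
def synRel {α : Type*} (L : Set (List α)) (x y : List α) : Prop :=
  ∀ u v : List α, u ++ x ++ v ∈ L ↔ u ++ y ++ v ∈ L

/-- The syntactic setoid on the free semigroup of non-empty words. -/
def synSetoid {α : Type*} (L : Set (List α)) : Setoid {w : List α // w ≠ []} :=
  ⟨fun x y => synRel L x.1 y.1,
   ⟨fun _ _ _ => Iff.rfl, fun h u v => (h u v).symm,
    fun h₁ h₂ u v => (h₁ u v).trans (h₂ u v)⟩⟩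

/-- Syntactic complexity: the cardinality of the syntactic semigroup of `L`. -/
noncomputable def synCompl {α : Type*} (L : Set (List α)) : ℕ :=
  Nat.card (Quotient (synSetoid L))

/-- `L` is a right ideal: it is non-empty and `L = LΣ*`. -/
def IsRightIdeal {α : Type*} (L : Set (List α)) : Prop :=
  L.Nonempty ∧ L = {x | ∃ u ∈ L, ∃ v : List α, x = u ++ v}

/-- `L` is a left ideal: it is non-empty and `L = Σ*L`. -/
def IsLeftIdeal {α : Type*} (L : Set (List α)) : Prop :=
  L.Nonempty ∧ L = {x | ∃ u : List α, ∃ v ∈ L, x = u ++ v}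

/-- `L` is a two-sided ideal: it is non-empty and `L = Σ*LΣ*`. -/
def IsTwoSidedIdeal {α : Type*} (L : Set (List α)) : Prop :=
  L.Nonempty ∧ L = {x | ∃ u : List α, ∃ w ∈ L, ∃ v : List α, x = u ++ w ++ v}

/-- The reverse of a language. -/
def langReverse {α : Type*} (L : Set (List α)) : Set (List α) :=
  List.reverse '' L

/-- The transition function of the automaton `𝒜_n` of Definition 1:
`a = (0,1,…,n-2)` fixing `n-1`, `b = (0,1)`, `c : n-2 ↦ 0`, `d : n-2 ↦ n-1`. -/
def step9 (n : ℕ) (hn : 4 ≤ n) : Fin n → Fin 4 → Fin n := fun q l =>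
  if l.val = 0 then -- a : the cycle (0, 1, …, n-2), fixing n-1
    if q.val = n - 2 then ⟨0, by omega⟩
    else if _h : q.val = n - 1 then q
    else ⟨q.val + 1, by have := q.isLt; omega⟩
  else if l.val = 1 then -- b : the transposition (0, 1)
    if q.val = 0 then ⟨1, by omega⟩
    else if q.val = 1 then ⟨0, by omega⟩
    else q
  else if l.val = 2 then -- c : n-2 ↦ 0, fixing all other states
    if q.val = n - 2 then ⟨0, by omega⟩ else q
  else -- d : n-2 ↦ n-1, fixing all other states
    if q.val = n - 2 then ⟨n - 1, by omega⟩ else q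

namespace S9

variable (n : ℕ) (hn : 4 ≤ n)

/-- The sink (accepting) state `n-1`. -/
def lst : Fin n := ⟨n - 1, by omega⟩

/-- The action of a word on a state. -/
def act (w : List (Fin 4)) (q : Fin n) : Fin n := w.foldl (step9 n hn) q

@[simp] lemma act_nil (q : Fin n) : act n hn [] q = q := rfl

@[simp] lemma act_cons (l : Fin 4) (w : List (Fin 4)) (q : Fin n) :
    act n hn (l :: w) q = act n hn w (step9 n hn q l) := rfl

@[simp] lemma act_append (w v : List (Fin 4)) (q : Fin n) :
    act n hn (w ++ v) q = act n hn v (act n hn w q) := List.foldl_append ..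

@[simp] lemma act_singleton (l : Fin 4) (q : Fin n) :
    act n hn [l] q = step9 n hn q l := rfl

lemma step_of_last (l : Fin 4) (q : Fin n) (hq : q.val = n - 1) :
    step9 n hn q l = q := by
  unfold step9
  split_ifs
  all_goals first | rfl | (apply Fin.ext; simp only [Fin.val_mk]; omega)

lemma step_lst (l : Fin 4) : step9 n hn (lst n hn) l = lst n hn :=
  step_of_last n hn l _ rfl

@[simp] lemma act_lst (w : List (Fin 4)) : act n hn w (lst n hn) = lst n hn := by
  induction w with
  | nil => rfl
  | cons l w ih => rw [act_cons, step_lst]; exact ih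

lemma step_a (q : Fin n) (hq : q.val < n - 1) :
    (step9 n hn q 0).val = (q.val + 1) % (n - 1) := by
  have e0 : ((0 : Fin 4)).val = 0 := rfl
  unfold step9
  rw [e0, if_pos rfl]
  split_ifs with h1 h2
  · simp only [Fin.val_mk]
    have h : q.val + 1 = n - 1 := by omega
    rw [h, Nat.mod_self]
  · omega
  · simp only [Fin.val_mk]
    exact (Nat.mod_eq_of_lt (by omega)).symm

lemma act_a_pow (k : ℕ) : ∀ q : Fin n, q.val < n - 1 →
    (act n hn (List.replicate k 0) q).val = (q.val + k) % (n - 1) := by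
  induction k with
  | zero => intro q hq; simp [Nat.mod_eq_of_lt hq]
  | succ k ih =>
    intro q hq
    rw [List.replicate_succ, act_cons]
    have h1 := step_a n hn q hq
    have h2 : (step9 n hn q 0).val < n - 1 := by
      rw [h1]; exact Nat.mod_lt _ (by omega)
    rw [ih _ h2, h1, Nat.mod_add_mod]
    have h : q.val + 1 + k = q.val + (k + 1) := by omega
    rw [h]

lemma step_d_of_ne (q : Fin n) (hq : q.val ≠ n - 2) : step9 n hn q 3 = q := by
  have e3 : ((3 : Fin 4)).val = 3 := rfl
  unfold step9
  rw [e3]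
  norm_num [hq]

lemma step_d_last (q : Fin n) (hq : q.val = n - 2) : step9 n hn q 3 = lst n hn := by
  have e3 : ((3 : Fin 4)).val = 3 := rfl
  unfold step9 lst
  rw [e3]
  norm_num [hq]

/-- Reachability: every state is reachable from `0`. -/
lemma reach (q : Fin n) : ∃ w : List (Fin 4), act n hn w ⟨0, by omega⟩ = q := by
  by_cases hq : q.val < n - 1
  · refine ⟨List.replicate q.val 0, Fin.ext ?_⟩
    rw [act_a_pow n hn _ _ (by simp only [Fin.val_mk]; omega)]
    simp only [Fin.val_mk, Nat.zero_add]
    exact Nat.mod_eq_of_lt hq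
  · have hq' : q = lst n hn := Fin.ext (by have := q.isLt; simp only [lst]; omega)
    refine ⟨List.replicate (n - 2) 0 ++ [3], ?_⟩
    rw [act_append, act_singleton, hq']
    apply step_d_last
    rw [act_a_pow n hn _ _ (by simp only [Fin.val_mk]; omega)]
    simp only [Fin.val_mk, Nat.zero_add]
    exact Nat.mod_eq_of_lt (by omega)

/-- Distinguishability. -/
lemma distinguish (p q : Fin n) (hpq : p ≠ q) :
    ∃ v : List (Fin 4), ¬(act n hn v p = lst n hn ↔ act n hn v q = lst n hn) := by
  have key : ∀ p q : Fin n, p.val < n - 1 → q.val < n - 1 → p ≠ q →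
      ∃ v : List (Fin 4), act n hn v p = lst n hn ∧ act n hn v q ≠ lst n hn := by
    intro p q hp hq hpq
    have hpqv : p.val ≠ q.val := fun h => hpq (Fin.ext h)
    set k := n - 2 - p.val with hk
    refine ⟨List.replicate k 0 ++ [3], ?_, ?_⟩
    · rw [act_append, act_singleton]
      apply step_d_last
      rw [act_a_pow n hn _ _ hp, Nat.mod_eq_of_lt (by omega)]
      omega
    · rw [act_append, act_singleton]
      have hv : (act n hn (List.replicate k 0) q).val = (q.val + k) % (n - 1) :=
        act_a_pow n hn _ _ hq
      have hne : (act n hn (List.replicate k 0) q).val ≠ n - 2 := by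
        rw [hv]
        intro hcon
        rcases Nat.lt_or_ge (q.val + k) (n - 1) with h | h
        · rw [Nat.mod_eq_of_lt h] at hcon; omega
        · rw [Nat.mod_eq_sub_mod h, Nat.mod_eq_of_lt (by omega)] at hcon; omega
      rw [step_d_of_ne n hn _ hne]
      intro hcon
      have : (act n hn (List.replicate k 0) q).val = n - 1 := by rw [hcon]; rfl
      rw [hv] at this
      have hlt : (q.val + k) % (n - 1) < n - 1 := Nat.mod_lt _ (by omega)
      omega
  by_cases hp : p.val < n - 1
  · by_cases hq : q.val < n - 1
    · obtain ⟨v, h1, h2⟩ := key p q hp hq hpq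
      exact ⟨v, fun h => h2 (h.mp h1)⟩
    · have hq' : q = lst n hn := Fin.ext (by have := q.isLt; simp only [lst]; omega)
      refine ⟨[], fun h => ?_⟩
      simp only [act_nil] at h
      have : p = lst n hn := h.mpr hq'
      exact absurd (this ▸ rfl : p.val = n - 1) (by omega)
  · have hp' : p = lst n hn := Fin.ext (by have := p.isLt; simp only [lst]; omega)
    by_cases hq : q.val < n - 1
    · refine ⟨[], fun h => ?_⟩
      simp only [act_nil] at h
      have : q = lst n hn := h.mp hp'
      exact absurd (this ▸ rfl : q.val = n - 1) (by omega)
    · exfalso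
      have hq' : q = lst n hn := Fin.ext (by have := q.isLt; simp only [lst]; omega)
      exact hpq (hp'.trans hq'.symm)

/-! ### The transition semigroup -/

/-- Transformations realizable by non-empty words. -/
def R : Set (Fin n → Fin n) := {f | ∃ w : List (Fin 4), w ≠ [] ∧ act n hn w = f}

lemma mem_R_letter (l : Fin 4) : (fun q => step9 n hn q l) ∈ R n hn :=
  ⟨[l], by simp, rfl⟩

lemma R_comp {f g : Fin n → Fin n} (hf : f ∈ R n hn) (hg : g ∈ R n hn) :
    f ∘ g ∈ R n hn := by
  obtain ⟨w, hw, rfl⟩ := hf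
  obtain ⟨v, hv, rfl⟩ := hg
  exact ⟨v ++ w, by simp [hv], by funext q; simp⟩

lemma fix_lst_of_mem_R {f : Fin n → Fin n} (hf : f ∈ R n hn) :
    f (lst n hn) = lst n hn := by
  obtain ⟨w, hw, rfl⟩ := hf
  exact act_lst n hn w

lemma step_b_eq :
    (fun q => step9 n hn q 1) =
      ⇑(Equiv.swap (⟨0, by omega⟩ : Fin n) ⟨1, by omega⟩) := by
  funext q
  rw [Fin.ext_iff]
  unfold step9
  norm_num [show ((1 : Fin 4)).val = 1 from rfl, Equiv.swap_apply_def, Fin.ext_iff,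
    apply_ite Fin.val]
  all_goals split_ifs <;> omega

lemma step_c_eq :
    (fun q => step9 n hn q 2) =
      Function.update id (⟨n - 2, by omega⟩ : Fin n) ⟨0, by omega⟩ := by
  funext q
  rw [Fin.ext_iff]
  unfold step9
  norm_num [show ((2 : Fin 4)).val = 2 from rfl, Function.update_apply, Fin.ext_iff,
    apply_ite Fin.val]
  all_goals split_ifs <;> omega

lemma step_d_eq :
    (fun q => step9 n hn q 3) =
      Function.update id (⟨n - 2, by omega⟩ : Fin n) (lst n hn) := by
  funext q
  rw [Fin.ext_iff]
  unfold step9 lst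
  norm_num [show ((3 : Fin 4)).val = 3 from rfl, Function.update_apply, Fin.ext_iff,
    apply_ite Fin.val]
  all_goals split_ifs <;> omega

lemma R_id : id ∈ R n hn := by
  have h := R_comp n hn (mem_R_letter n hn 1) (mem_R_letter n hn 1)
  have he : (fun q => step9 n hn q 1) ∘ (fun q => step9 n hn q 1) = id := by
    rw [step_b_eq]
    funext x
    simp [Equiv.swap_apply_self]
  rwa [he] at h

/-- The `a`-transformation. -/
def taF : Fin n → Fin n := fun q => step9 n hn q 0

/-- The inverse of the `a`-transformation. -/
def taI : Fin n → Fin n := act n hn (List.replicate (n - 2) 0)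

lemma a_pow_n1 : act n hn (List.replicate (n - 1) 0) = id := by
  funext q
  by_cases hq : q.val < n - 1
  · apply Fin.ext
    rw [act_a_pow n hn _ _ hq, Nat.add_mod_right, id_eq]
    exact Nat.mod_eq_of_lt hq
  · have hq' : q = lst n hn := Fin.ext (by have := q.isLt; simp only [lst]; omega)
    rw [hq', act_lst]
    rfl

lemma taF_taI : ∀ x, taF n hn (taI n hn x) = x := by
  intro q
  have h2 : List.replicate (n - 1) (0 : Fin 4) = List.replicate (n - 2) 0 ++ [0] := by
    have h1 : n - 1 = (n - 2) + 1 := by omega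
    rw [h1, List.replicate_succ']
  have := congrFun (a_pow_n1 n hn) q
  rw [h2, act_append, act_singleton] at this
  exact this

lemma taI_taF : ∀ x, taI n hn (taF n hn x) = x := by
  intro q
  have h2 : List.replicate (n - 1) (0 : Fin 4) = 0 :: List.replicate (n - 2) 0 := by
    have h1 : n - 1 = (n - 2) + 1 := by omega
    rw [h1, List.replicate_succ]
  have := congrFun (a_pow_n1 n hn) q
  rw [h2, act_cons] at this
  exact this

lemma taF_mem : taF n hn ∈ R n hn := mem_R_letter n hn 0

lemma taI_mem : taI n hn ∈ R n hn :=
  ⟨List.replicate (n - 2) 0, by simp; omega, rfl⟩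

/-- Conjugation of a swap by a bijection. -/
lemma conj_swap (s s' : Fin n → Fin n) (hss : ∀ x, s (s' x) = x)
    (hs's : ∀ x, s' (s x) = x) (i j : Fin n) :
    s ∘ ⇑(Equiv.swap i j) ∘ s' = ⇑(Equiv.swap (s i) (s j)) := by
  funext x
  simp only [Function.comp_apply, Equiv.swap_apply_def]
  by_cases h1 : s' x = i
  · rw [if_pos h1, if_pos (show x = s i by rw [← h1, hss])]
  · rw [if_neg h1, if_neg (show ¬x = s i from fun hh => h1 (by rw [hh, hs's]))]
    by_cases h2 : s' x = j
    · rw [if_pos h2, if_pos (show x = s j by rw [← h2, hss])]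
    · rw [if_neg h2, if_neg (show ¬x = s j from fun hh => h2 (by rw [hh, hs's])), hss]

/-- Conjugation of a collapse by a bijection. -/
lemma conj_update (s s' : Fin n → Fin n) (hss : ∀ x, s (s' x) = x)
    (hs's : ∀ x, s' (s x) = x) (i j : Fin n) :
    s ∘ Function.update id i j ∘ s' = Function.update id (s i) (s j) := by
  funext x
  simp only [Function.comp_apply, Function.update_apply, id_eq]
  by_cases h1 : s' x = i
  · rw [if_pos h1, if_pos (show x = s i by rw [← h1, hss])]
  · rw [if_neg h1, if_neg (show ¬x = s i from fun hh => h1 (by rw [hh, hs's])), hss]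

lemma taF_apply (k : ℕ) (hk : k + 2 ≤ n - 1) :
    taF n hn ⟨k, by omega⟩ = ⟨k + 1, by omega⟩ := by
  apply Fin.ext
  rw [show (⟨k + 1, by omega⟩ : Fin n).val = k + 1 from rfl]
  have := step_a n hn ⟨k, by omega⟩ (by simp only [Fin.val_mk]; omega)
  rw [show ((⟨k, by omega⟩ : Fin n)).val = k from rfl] at this
  rw [taF, this]
  exact Nat.mod_eq_of_lt (by omega)

lemma swap01_mem :
    ⇑(Equiv.swap (⟨0, by omega⟩ : Fin n) ⟨1, by omega⟩) ∈ R n hn := by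
  rw [← step_b_eq]
  exact mem_R_letter n hn 1

lemma adj_swap_mem : ∀ k : ℕ, ∀ hk : k + 2 ≤ n - 1,
    ⇑(Equiv.swap (⟨k, by omega⟩ : Fin n) ⟨k + 1, by omega⟩) ∈ R n hn := by
  intro k
  induction k with
  | zero => intro h2; exact swap01_mem n hn
  | succ k ih =>
    intro h2
    have hprev := ih (by omega)
    have key : ⇑(Equiv.swap (⟨k + 1, by omega⟩ : Fin n) ⟨k + 1 + 1, by omega⟩)
        = taF n hn ∘ ⇑(Equiv.swap (⟨k, by omega⟩ : Fin n) ⟨k + 1, by omega⟩) ∘ taI n hn := by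
      rw [conj_swap n (taF n hn) (taI n hn) (taF_taI n hn) (taI_taF n hn),
        taF_apply n hn k (by omega), taF_apply n hn (k + 1) (by omega)]
    rw [key]
    exact R_comp n hn (taF_mem n hn) (R_comp n hn hprev (taI_mem n hn))

lemma swap_congr_mem (i j i' j' : Fin n) (hi : i = i') (hj : j = j')
    (h : ⇑(Equiv.swap i' j') ∈ R n hn) : ⇑(Equiv.swap i j) ∈ R n hn := by
  subst hi; subst hj; exact h

lemma swap_mem_of_dist : ∀ (d : ℕ) (i j : Fin n), i.val < n - 1 → j.val < n - 1 →
    j.val = i.val + d + 1 → ⇑(Equiv.swap i j) ∈ R n hn := by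
  intro d
  induction d with
  | zero =>
    intro i j hi hj hd
    exact swap_congr_mem n hn i j _ _ (Fin.ext rfl)
      (Fin.ext (by simp only [Fin.val_mk]; omega))
      (adj_swap_mem n hn i.val (by omega))
  | succ d ih =>
    intro i j hi hj hd
    set j' : Fin n := ⟨i.val + d + 1, by omega⟩ with hj'
    have hij' : i ≠ j' := by
      intro h
      have := congrArg Fin.val h
      simp only [hj', Fin.val_mk] at this
      omega
    have hij : i ≠ j := by
      intro h
      have := congrArg Fin.val h
      omega
    have hj'j : j' ≠ j := by
      intro h
      have := congrArg Fin.val h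
      simp only [hj', Fin.val_mk] at this
      omega
    have key : ⇑(Equiv.swap i j)
        = ⇑(Equiv.swap j' j) ∘ ⇑(Equiv.swap i j') ∘ ⇑(Equiv.swap j' j) := by
      rw [conj_swap n (⇑(Equiv.swap j' j)) (⇑(Equiv.swap j' j))
        (Equiv.swap_apply_self j' j) (Equiv.swap_apply_self j' j),
        Equiv.swap_apply_of_ne_of_ne hij' hij, Equiv.swap_apply_left]
    rw [key]
    have hadj : ⇑(Equiv.swap j' j) ∈ R n hn :=
      swap_congr_mem n hn j' j _ _ (Fin.ext rfl)
        (Fin.ext (by simp only [Fin.val_mk]; omega))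
        (adj_swap_mem n hn (i.val + d + 1) (by omega))
    have hih : ⇑(Equiv.swap i j') ∈ R n hn :=
      ih i j' hi (by simp only [hj', Fin.val_mk]; omega) (by simp only [hj', Fin.val_mk])
    exact R_comp n hn hadj (R_comp n hn hih hadj)

lemma swap_mem (i j : Fin n) (hi : i.val < n - 1) (hj : j.val < n - 1) :
    ⇑(Equiv.swap i j) ∈ R n hn := by
  rcases lt_trichotomy i.val j.val with h | h | h
  · exact swap_mem_of_dist n hn (j.val - i.val - 1) i j hi hj (by omega)
  · have : i = j := Fin.ext h
    rw [this, Equiv.swap_self]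
    exact R_id n hn
  · rw [Equiv.swap_comm]
    exact swap_mem_of_dist n hn (i.val - j.val - 1) j i hj hi (by omega)

lemma ne_lst_iff (x : Fin n) : x ≠ lst n hn ↔ x.val < n - 1 := by
  constructor
  · intro h
    have := x.isLt
    rcases Nat.lt_or_ge x.val (n - 1) with h' | h'
    · exact h'
    · exact absurd (Fin.ext (by simp only [lst]; omega)) h
  · intro h hx
    rw [hx] at h
    simp only [lst, Fin.val_mk] at h
    omega

lemma perm_mem_aux : ∀ (m : ℕ) (σ : Equiv.Perm (Fin n)), σ (lst n hn) = lst n hn →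
    (Finset.univ.filter fun x => σ x ≠ x).card ≤ m → ⇑σ ∈ R n hn := by
  intro m
  induction m with
  | zero =>
    intro σ hσ hc
    have hall : ∀ x, σ x = x := by
      intro x
      by_contra hx
      have : x ∈ Finset.univ.filter fun x => σ x ≠ x := by
        simp [hx]
      have := Finset.card_pos.mpr ⟨x, this⟩
      omega
    have : ⇑σ = id := funext hall
    rw [this]
    exact R_id n hn
  | succ m ih =>
    intro σ hσ hc
    by_cases hall : ∀ x, σ x = x
    · have : ⇑σ = id := funext hall
      rw [this]
      exact R_id n hn
    · push_neg at hall
      obtain ⟨x, hx⟩ := hall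
      have hxl : x ≠ lst n hn := fun h => hx (by rw [h]; exact hσ)
      have hσxl : σ x ≠ lst n hn := fun h => hxl (σ.injective (h.trans hσ.symm))
      set τ : Equiv.Perm (Fin n) := Equiv.swap x (σ x) * σ with hτ
      have hτl : τ (lst n hn) = lst n hn := by
        simp only [hτ, Equiv.Perm.mul_apply, hσ]
        exact Equiv.swap_apply_of_ne_of_ne (Ne.symm hxl) (Ne.symm hσxl)
      have hτsub : (Finset.univ.filter fun y => τ y ≠ y) ⊆
          (Finset.univ.filter fun y => σ y ≠ y).erase x := by
        intro y hy
        simp only [Finset.mem_filter, Finset.mem_univ, true_and] at hy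
        rw [Finset.mem_erase]
        constructor
        · intro h
          apply hy
          rw [h]
          simp only [hτ, Equiv.Perm.mul_apply]
          exact Equiv.swap_apply_right x (σ x)
        · simp only [Finset.mem_filter, Finset.mem_univ, true_and]
          intro hσy
          apply hy
          have hyx : y ≠ x := fun h => hx (by rw [← h, hσy])
          have hyσx : y ≠ σ x := by
            intro h
            exact hx (σ.injective (by rw [← h, hσy]))
          simp only [hτ, Equiv.Perm.mul_apply, hσy]
          exact Equiv.swap_apply_of_ne_of_ne hyx hyσx
      have hxmem : x ∈ Finset.univ.filter fun y => σ y ≠ y := by simp [hx]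
      have hcard : (Finset.univ.filter fun y => τ y ≠ y).card ≤ m := by
        have h1 := Finset.card_le_card hτsub
        rw [Finset.card_erase_of_mem hxmem] at h1
        have h2 := Finset.card_pos.mpr ⟨x, hxmem⟩
        omega
      have hτR := ih τ hτl hcard
      have hsw : ⇑(Equiv.swap x (σ x)) ∈ R n hn :=
        swap_mem n hn x (σ x) ((ne_lst_iff n hn x).mp hxl) ((ne_lst_iff n hn (σ x)).mp hσxl)
      have hdecomp : σ = Equiv.swap x (σ x) * τ := by
        rw [hτ, ← mul_assoc, Equiv.swap_mul_self, one_mul]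
      rw [hdecomp]
      rw [Equiv.Perm.coe_mul]
      exact R_comp n hn hsw hτR

lemma perm_mem (σ : Equiv.Perm (Fin n)) (hσ : σ (lst n hn) = lst n hn) :
    ⇑σ ∈ R n hn :=
  perm_mem_aux n hn (Finset.univ.filter fun x => σ x ≠ x).card σ hσ le_rfl

lemma lst_val : (lst n hn).val = n - 1 := rfl

lemma collapse_mem (i j : Fin n) (hi : i.val < n - 1) (hij : i ≠ j) :
    Function.update id i j ∈ R n hn := by
  by_cases hj : j = lst n hn
  · subst hj
    set s : Fin n → Fin n := ⇑(Equiv.swap (⟨n - 2, by omega⟩ : Fin n) i) with hs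
    have hinv : ∀ x, s (s x) = x := Equiv.swap_apply_self _ _
    have h1 : s ⟨n - 2, by omega⟩ = i := Equiv.swap_apply_left _ _
    have h2 : s (lst n hn) = lst n hn := by
      apply Equiv.swap_apply_of_ne_of_ne
      · intro h
        have := congrArg Fin.val h
        simp only [lst_val, Fin.val_mk] at this
        omega
      · exact Ne.symm ((ne_lst_iff n hn i).mpr hi)
    have key : Function.update id i (lst n hn)
        = s ∘ Function.update id (⟨n - 2, by omega⟩ : Fin n) (lst n hn) ∘ s := by
      rw [conj_update n s s hinv hinv, h1, h2]
    rw [key, ← step_d_eq n hn]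
    have hsR : s ∈ R n hn := swap_mem n hn _ _ (by simp only [Fin.val_mk]; omega) hi
    exact R_comp n hn hsR (R_comp n hn (mem_R_letter n hn 3) hsR)
  · have hjv : j.val < n - 1 := (ne_lst_iff n hn j).mp hj
    set z : Fin n := ⟨0, by omega⟩ with hz
    set m2 : Fin n := ⟨n - 2, by omega⟩ with hm2
    set s1 : Fin n → Fin n := ⇑(Equiv.swap z j) with hs1
    set i'' : Fin n := s1 i with hi''
    set s2 : Fin n → Fin n := ⇑(Equiv.swap m2 i'') with hs2
    have hinv1 : ∀ x, s1 (s1 x) = x := Equiv.swap_apply_self _ _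
    have hinv2 : ∀ x, s2 (s2 x) = x := Equiv.swap_apply_self _ _
    set s : Fin n → Fin n := s1 ∘ s2 with hsdef
    set s' : Fin n → Fin n := s2 ∘ s1 with hs'def
    have hss : ∀ x, s (s' x) = x := by
      intro x
      simp only [hsdef, hs'def, Function.comp_apply, hinv1, hinv2]
    have hs's : ∀ x, s' (s x) = x := by
      intro x
      simp only [hsdef, hs'def, Function.comp_apply, hinv1, hinv2]
    have hzv : z.val = 0 := rfl
    have hm2v : m2.val = n - 2 := rfl
    have hi''v : i''.val < n - 1 := by
      rw [hi'', hs1, Equiv.swap_apply_def]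
      split_ifs <;> omega
    have hm2s : s m2 = i := by
      rw [hsdef, Function.comp_apply, hs2, Equiv.swap_apply_left, hi'', hinv1]
    have hi''z : i'' ≠ z := by
      intro h
      apply hij
      have : s1 i'' = s1 z := congrArg s1 h
      rw [hi'', hinv1, hs1, Equiv.swap_apply_left] at this
      exact this
    have hzs : s z = j := by
      rw [hsdef, Function.comp_apply, hs2]
      rw [Equiv.swap_apply_of_ne_of_ne (by
          intro h
          have := congrArg Fin.val h
          rw [hzv, hm2v] at this
          omega) (Ne.symm hi''z)]
      rw [hs1, Equiv.swap_apply_left]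
    have key : Function.update id i j = s ∘ Function.update id m2 z ∘ s' := by
      rw [conj_update n s s' hss hs's, hm2s, hzs]
    have hs1R : s1 ∈ R n hn := swap_mem n hn _ _ (by rw [hzv]; omega) hjv
    have hs2R : s2 ∈ R n hn := swap_mem n hn _ _ (by rw [hm2v]; omega) hi''v
    have hsR : s ∈ R n hn := R_comp n hn hs1R hs2R
    have hs'R : s' ∈ R n hn := R_comp n hn hs2R hs1R
    have hcR : Function.update id m2 z ∈ R n hn := by
      rw [hm2, hz, ← step_c_eq n hn]
      exact mem_R_letter n hn 2
    rw [key]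
    exact R_comp n hn hsR (R_comp n hn hcR hs'R)

/-- Every transformation fixing the sink state is realized by a non-empty word. -/
lemma gen_main : ∀ (m : ℕ) (f : Fin n → Fin n), f (lst n hn) = lst n hn →
    n - (Finset.image f Finset.univ).card ≤ m → f ∈ R n hn := by
  have inj_case : ∀ f : Fin n → Fin n, Function.Injective f →
      f (lst n hn) = lst n hn → f ∈ R n hn := by
    intro f hinj hf
    have hbij : Function.Bijective f := (Finite.injective_iff_bijective).mp hinj
    exact perm_mem n hn (Equiv.ofBijective f hbij) hf
  intro m
  induction m with
  | zero =>
    intro f hf hcard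
    apply inj_case f _ hf
    have h1 : (Finset.image f Finset.univ).card ≤ Finset.univ.card := Finset.card_le_univ _
    have h2 : (Finset.univ : Finset (Fin n)).card = n := by simp
    have h3 : Finset.image f Finset.univ = Finset.univ :=
      Finset.eq_univ_of_card _ (by simp only [Fintype.card_fin]; omega)
    have hsurj : Function.Surjective f := by
      intro y
      have : y ∈ Finset.image f Finset.univ := by rw [h3]; exact Finset.mem_univ y
      obtain ⟨x, _, hx⟩ := Finset.mem_image.mp this
      exact ⟨x, hx⟩
    exact Finite.injective_iff_surjective.mpr hsurj
  | succ m ih =>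
    intro f hf hcard
    by_cases hinj : Function.Injective f
    · exact inj_case f hinj hf
    · obtain ⟨i₀, j₀, hfij, hij₀⟩ := Function.not_injective_iff.mp hinj
      -- choose the collapsed point to be different from lst
      obtain ⟨i, j, hfij, hij, hjl⟩ :
          ∃ i j : Fin n, f i = f j ∧ i ≠ j ∧ j ≠ lst n hn := by
        by_cases h : j₀ = lst n hn
        · exact ⟨j₀, i₀, hfij.symm, hij₀.symm, h ▸ hij₀⟩
        · exact ⟨i₀, j₀, hfij, hij₀, h⟩
      have hksurj : ∃ k, k ∉ Finset.image f Finset.univ := by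
        by_contra hk
        push_neg at hk
        apply hinj
        apply Finite.injective_iff_surjective.mpr
        intro y
        obtain ⟨x, _, hx⟩ := Finset.mem_image.mp (hk y)
        exact ⟨x, hx⟩
      obtain ⟨k, hk⟩ := hksurj
      set f' := Function.update f j k with hf'
      have hf'l : f' (lst n hn) = lst n hn := by
        rw [hf', Function.update_of_ne (Ne.symm hjl), hf]
      have hsub : insert k (Finset.image f Finset.univ) ⊆ Finset.image f' Finset.univ := by
        intro y hy
        rcases Finset.mem_insert.mp hy with h | h
        · subst h
          exact Finset.mem_image.mpr ⟨j, Finset.mem_univ j, by rw [hf', Function.update_self]⟩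
        · obtain ⟨x, _, hx⟩ := Finset.mem_image.mp h
          by_cases hxj : x = j
          · refine Finset.mem_image.mpr ⟨i, Finset.mem_univ i, ?_⟩
            rw [hf', Function.update_of_ne hij, hfij, ← hxj, hx]
          · exact Finset.mem_image.mpr ⟨x, Finset.mem_univ x,
              by rw [hf', Function.update_of_ne hxj, hx]⟩
      have hcard' : n - (Finset.image f' Finset.univ).card ≤ m := by
        have h1 := Finset.card_le_card hsub
        rw [Finset.card_insert_of_notMem hk] at h1
        omega
      have hf'R := ih f' hf'l hcard'
      have hcol : Function.update id j i ∈ R n hn :=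
        collapse_mem n hn j i ((ne_lst_iff n hn j).mp hjl) (Ne.symm hij)
      have hdec : f = f' ∘ Function.update id j i := by
        funext x
        by_cases hxj : x = j
        · subst hxj
          show f x = f' (Function.update id x i x)
          rw [Function.update_self, hf', Function.update_of_ne hij, hfij]
        · show f x = f' (Function.update id j i x)
          rw [Function.update_of_ne hxj, id_eq, hf', Function.update_of_ne hxj]
      rw [hdec]
      exact R_comp n hn hf'R hcol

lemma mem_R_of_fix (f : Fin n → Fin n) (hf : f (lst n hn) = lst n hn) :
    f ∈ R n hn :=
  gen_main n hn n f hf (by omega)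

end S9

/-- For `n ≥ 4`, the automaton `𝒜_n` with states `{0,…,n-1}`,
alphabet `{a,b,c,d}`, initial state `0`, final state `n-1` (transitions as in
`step9`) accepts a right ideal with quotient complexity `n` and syntactic
complexity exactly `n^{n-1}`. -/
theorem stmt_9 (n : ℕ) (hn : 4 ≤ n) :
    let M : DFA (Fin 4) (Fin n) :=
      { step := step9 n hn, start := ⟨0, by omega⟩, accept := {⟨n - 1, by omega⟩} }
    IsRightIdeal (M.accepts : Set (List (Fin 4))) ∧
    quotCompl (M.accepts : Set (List (Fin 4))) = n ∧
    synCompl (M.accepts : Set (List (Fin 4))) = n ^ (n - 1) := by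
  intro M
  have hL : ∀ w : List (Fin 4), w ∈ (M.accepts : Set (List (Fin 4))) ↔
      S9.act n hn w ⟨0, by omega⟩ = S9.lst n hn := fun w => Iff.rfl
  refine ⟨⟨?_, ?_⟩, ?_, ?_⟩
  · -- non-empty
    obtain ⟨w, hw⟩ := S9.reach n hn (S9.lst n hn)
    exact ⟨w, (hL w).mpr hw⟩
  · -- L = L Σ*
    ext x
    simp only [Set.mem_setOf_eq]
    constructor
    · intro hx
      exact ⟨x, hx, [], (List.append_nil x).symm⟩
    · rintro ⟨u, hu, v, rfl⟩
      have hu' := (hL u).mp hu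
      exact (hL (u ++ v)).mpr (by rw [S9.act_append, hu', S9.act_lst])
  · -- quotient complexity
    have hrange : Set.range (leftQ (M.accepts : Set (List (Fin 4)))) =
        Set.range (fun p : Fin n => {x : List (Fin 4) | S9.act n hn x p = S9.lst n hn}) := by
      ext S
      constructor
      · rintro ⟨w, rfl⟩
        refine ⟨S9.act n hn w ⟨0, by omega⟩, ?_⟩
        ext x
        constructor
        · intro h
          show w ++ x ∈ (M.accepts : Set (List (Fin 4)))
          rw [hL, S9.act_append]
          exact h
        · intro h
          have h2 := (hL (w ++ x)).mp h
          rw [S9.act_append] at h2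
          exact h2
      · rintro ⟨p, rfl⟩
        obtain ⟨w, hw⟩ := S9.reach n hn p
        refine ⟨w, ?_⟩
        ext x
        constructor
        · intro h
          have h2 := (hL (w ++ x)).mp h
          rw [S9.act_append, hw] at h2
          exact h2
        · intro h
          show w ++ x ∈ (M.accepts : Set (List (Fin 4)))
          rw [hL, S9.act_append, hw]
          exact h
    have hinj : Function.Injective
        (fun p : Fin n => {x : List (Fin 4) | S9.act n hn x p = S9.lst n hn}) := by
      intro p q hpq
      by_contra hne
      obtain ⟨v, hv⟩ := S9.distinguish n hn p q hne
      apply hv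
      exact Set.ext_iff.mp hpq v
    show Nat.card (Set.range (leftQ (M.accepts : Set (List (Fin 4))))) = n
    rw [hrange, Nat.card_range_of_injective hinj, Nat.card_eq_fintype_card,
      Fintype.card_fin]
  · -- syntactic complexity
    have hsyn : ∀ x y : List (Fin 4), synRel (M.accepts : Set (List (Fin 4))) x y ↔
        S9.act n hn x = S9.act n hn y := by
      intro x y
      constructor
      · intro h
        funext p
        by_contra hne
        obtain ⟨u, hu⟩ := S9.reach n hn p
        obtain ⟨v, hv⟩ := S9.distinguish n hn (S9.act n hn x p) (S9.act n hn y p) hne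
        apply hv
        have h2 := h u v
        have h3 : (S9.act n hn (u ++ x ++ v) ⟨0, by omega⟩ = S9.lst n hn ↔
            S9.act n hn (u ++ y ++ v) ⟨0, by omega⟩ = S9.lst n hn) := h2
        simp only [S9.act_append, hu] at h3
        exact h3
      · intro h u v
        show S9.act n hn (u ++ x ++ v) ⟨0, by omega⟩ = S9.lst n hn ↔
            S9.act n hn (u ++ y ++ v) ⟨0, by omega⟩ = S9.lst n hn
        simp only [S9.act_append, h]
    have e : Quotient (synSetoid (M.accepts : Set (List (Fin 4)))) ≃
        {f : Fin n → Fin n // f (S9.lst n hn) = S9.lst n hn} := by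
      refine Equiv.ofBijective (Quotient.lift
        (fun a : {w : List (Fin 4) // w ≠ []} =>
          (⟨S9.act n hn a.1, S9.act_lst n hn a.1⟩ :
            {f : Fin n → Fin n // f (S9.lst n hn) = S9.lst n hn}))
        (fun a b hab => Subtype.ext ((hsyn a.1 b.1).mp hab))) ⟨?_, ?_⟩
      · intro q1 q2
        refine Quotient.inductionOn₂ q1 q2 ?_
        intro a b hab
        apply Quotient.sound
        exact (hsyn a.1 b.1).mpr (congrArg Subtype.val hab)
      · rintro ⟨f, hf⟩
        obtain ⟨w, hw, hact⟩ := S9.mem_R_of_fix n hn f hf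
        exact ⟨Quotient.mk _ ⟨w, hw⟩, Subtype.ext hact⟩
    show Nat.card (Quotient (synSetoid (M.accepts : Set (List (Fin 4))))) = n ^ (n - 1)
    rw [Nat.card_congr e]
    have e2 : {f : Fin n → Fin n // f (S9.lst n hn) = S9.lst n hn} ≃
        ({x : Fin n // x ≠ S9.lst n hn} → Fin n) :=
      { toFun := fun f x => f.1 x.1
        invFun := fun g => ⟨fun x => if h : x = S9.lst n hn then S9.lst n hn else g ⟨x, h⟩,
          by simp⟩
        left_inv := by
          intro f
          apply Subtype.ext
          funext x
          by_cases h : x = S9.lst n hn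
          · simp only [dif_pos h]
            rw [h, f.2]
          · simp only [dif_neg h]
        right_inv := by
          intro g
          funext x
          simp only [dif_neg x.2] }
    rw [Nat.card_congr e2, Nat.card_fun]
    have c2 : Nat.card {x : Fin n // x ≠ S9.lst n hn} = n - 1 := by
      rw [Nat.card_eq_fintype_card, Fintype.card_subtype_compl, Fintype.card_fin,
        Fintype.card_subtype_eq]
    rw [c2, Nat.card_eq_fintype_card, Fintype.card_fin]
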